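/- arXiv:2207.11015 — 2 statements merged into one kernel-verified Lean document; each statement's English description precedes it below -/
import Mathlib

section
/- Let q ≥ 2 and n ≥ 1 be integers and f : ℤ_q^n → ℤ_{2q}. Then for every z ∈ ℤ_q^n, the 2q-nega-autocorrelation satisfies C_f(z) = ω^{Σ_i ẑ_i} Σ_{u ∈ ℤ_q^n} |N_f(u)|² ξ^{⟨û,ẑ⟩}. -/
open Finset

/-- `ω = e^{πi/q}`, a primitive `2q`-th root of unity. -/
noncomputable def omg (q : ℕ) : ℂ := Complex.exp ((Real.pi : ℂ) * Complex.I / q)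

/-- `ξ = e^{2πi/q}`, a primitive `q`-th root of unity. -/
noncomputable def xiq (q : ℕ) : ℂ := Complex.exp (2 * (Real.pi : ℂ) * Complex.I / q)

/-- The `2q`-nega-Hadamard transform of `f : ℤ_q^n → ℤ_{2q}` at `u ∈ ℤ_q^n`:
`N_f(u) = q^{-n/2} Σ_x ω^{f(x)} ξ^{⟨x̂,û⟩} ω^{Σ_i x̂_i}`. -/
noncomputable def NHT (q n : ℕ) [NeZero q] (f : (Fin n → ZMod q) → ZMod (2 * q))
    (u : Fin n → ZMod q) : ℂ :=
  (Real.sqrt ((q : ℝ) ^ n) : ℂ)⁻¹ *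
    ∑ x : Fin n → ZMod q,
      omg q ^ (f x).val * xiq q ^ (∑ i, (x i).val * (u i).val) * omg q ^ (∑ i, (x i).val)

/-- The `2q`-nega-crosscorrelation of `f, g : ℤ_q^m → ℤ_{2q}` at `u`:
`C_{f,g}(u) = Σ_x ω^{f(x) − g(x+u)} (−1)^{n_q(x̂,û)}`. -/
noncomputable def negaCC (q m : ℕ) [NeZero q]
    (f g : (Fin m → ZMod q) → ZMod (2 * q)) (u : Fin m → ZMod q) : ℂ :=
  ∑ x : Fin m → ZMod q,
    omg q ^ (f x - g (x + u)).val *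
      (-1 : ℂ) ^ (Finset.univ.filter (fun i => q ≤ (x i).val + (u i).val)).card

/- ### Auxiliary lemmas -/

lemma omg_ne_zero (q : ℕ) : omg q ≠ 0 := Complex.exp_ne_zero _
lemma xiq_ne_zero (q : ℕ) : xiq q ≠ 0 := Complex.exp_ne_zero _

lemma xiq_eq_omg_sq (q : ℕ) : xiq q = omg q ^ 2 := by
  rw [omg, xiq, ← Complex.exp_nat_mul]; ring_nf

lemma omg_pow_q (q : ℕ) [NeZero q] : omg q ^ q = -1 := by
  rw [omg, ← Complex.exp_nat_mul]
  have hq : (q : ℂ) ≠ 0 := Nat.cast_ne_zero.mpr (NeZero.ne q)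
  rw [show (q : ℂ) * ((Real.pi : ℂ) * Complex.I / q) = Real.pi * Complex.I by field_simp]
  exact Complex.exp_pi_mul_I

lemma omg_pow_2q (q : ℕ) [NeZero q] : omg q ^ (2 * q) = 1 := by
  rw [mul_comm, pow_mul, omg_pow_q]; norm_num

lemma abs_omg (q : ℕ) [NeZero q] : ‖omg q‖ = 1 := by
  rw [omg, show (Real.pi : ℂ) * Complex.I / q = ((Real.pi / q : ℝ) : ℂ) * Complex.I by
    push_cast; ring]
  exact Complex.norm_exp_ofReal_mul_I _

lemma abs_xiq (q : ℕ) [NeZero q] : ‖xiq q‖ = 1 := by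
  rw [xiq_eq_omg_sq, norm_pow, abs_omg, one_pow]

lemma conj_omg (q : ℕ) [NeZero q] : (starRingEnd ℂ) (omg q) = (omg q)⁻¹ :=
  (Complex.inv_eq_conj (abs_omg q)).symm

lemma conj_xiq (q : ℕ) [NeZero q] : (starRingEnd ℂ) (xiq q) = (xiq q)⁻¹ :=
  (Complex.inv_eq_conj (abs_xiq q)).symm

lemma zpow_congr_mod {w : ℂ} (hw : w ≠ 0) {m : ℕ} (h1 : w ^ m = 1) {s t : ℤ}
    (h : s % (m : ℤ) = t % (m : ℤ)) : w ^ s = w ^ t := by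
  have key : ∀ a : ℤ, w ^ a = w ^ (a % (m : ℤ)) := by
    intro a
    conv_lhs => rw [← Int.emod_add_mul_ediv a (m : ℤ)]
    rw [zpow_add₀ hw, zpow_mul, zpow_natCast, h1, one_zpow, mul_one]
  rw [key s, key t, h]

lemma orth (q : ℕ) [NeZero q] (c : ℤ) :
    ∑ v : ZMod q, (xiq q ^ c) ^ (v : ZMod q).val
      = if (q : ℤ) ∣ c then (q : ℂ) else 0 := by
  have hprim : IsPrimitiveRoot (xiq q) q := Complex.isPrimitiveRoot_exp q (NeZero.ne q)
  have hsum : ∑ v : ZMod q, (xiq q ^ c) ^ (v : ZMod q).val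
      = ∑ k ∈ Finset.range q, (xiq q ^ c) ^ k := by
    apply Finset.sum_nbij' (fun v => (v : ZMod q).val) (fun k => (k : ZMod q))
    · intro v _; exact Finset.mem_range.mpr (ZMod.val_lt v)
    · intro k _; exact Finset.mem_univ _
    · intro v _; simp [ZMod.natCast_val, ZMod.cast_id]
    · intro k hk; exact ZMod.val_cast_of_lt (Finset.mem_range.mp hk)
    · intro v _; rfl
  rw [hsum]
  by_cases hdvd : (q : ℤ) ∣ c
  · have h1 : xiq q ^ c = 1 := by
      obtain ⟨k, rfl⟩ := hdvd
      rw [zpow_mul, zpow_natCast, hprim.pow_eq_one, one_zpow]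
    simp [h1, hdvd]
  · have h1 : xiq q ^ c ≠ 1 := fun h => hdvd ((hprim.zpow_eq_one_iff_dvd c).mp h)
    rw [geom_sum_eq h1]
    have h2 : (xiq q ^ c) ^ q = 1 := by
      rw [← zpow_natCast, ← zpow_mul, mul_comm, zpow_mul, zpow_natCast, hprim.pow_eq_one,
        one_zpow]
    rw [h2, sub_self, zero_div]
    simp [hdvd]

lemma zpow_sum₀ {w : ℂ} (hw : w ≠ 0) {ι : Type*} (s : Finset ι) (g : ι → ℤ) :
    w ^ (∑ i ∈ s, g i) = ∏ i ∈ s, w ^ g i := by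
  induction s using Finset.cons_induction with
  | empty => simp
  | cons a s ha ih => rw [Finset.sum_cons, Finset.prod_cons, zpow_add₀ hw, ih]

lemma pow_mul_inv_pow {w : ℂ} (hw : w ≠ 0) (a b : ℕ) :
    w ^ a * w⁻¹ ^ b = w ^ ((a : ℤ) - b) := by
  rw [inv_pow, ← zpow_natCast w a, ← zpow_natCast w b, ← zpow_neg, ← zpow_add₀ hw,
    sub_eq_add_neg]

/-- abstract combination lemma -/
lemma combine (q : ℕ) [NeZero q] (a1 a2 a3 a4 b1 b2 b3 : ℕ) :
    omg q ^ a1 * xiq q ^ b1 * omg q ^ a3 *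
      ((omg q)⁻¹ ^ a2 * (xiq q)⁻¹ ^ b2 * (omg q)⁻¹ ^ a4) * xiq q ^ b3
    = omg q ^ ((a1 : ℤ) - a2 + a3 - a4) * xiq q ^ ((b1 : ℤ) - b2 + b3) := by
  have hw := omg_ne_zero q
  have hx := xiq_ne_zero q
  rw [show omg q ^ a1 * xiq q ^ b1 * omg q ^ a3 *
      ((omg q)⁻¹ ^ a2 * (xiq q)⁻¹ ^ b2 * (omg q)⁻¹ ^ a4) * xiq q ^ b3
    = (omg q ^ a1 * (omg q)⁻¹ ^ a2) * ((omg q ^ a3 * (omg q)⁻¹ ^ a4) *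
        ((xiq q ^ b1 * (xiq q)⁻¹ ^ b2) * xiq q ^ b3)) from by ring]
  rw [pow_mul_inv_pow hw, pow_mul_inv_pow hw, pow_mul_inv_pow hx,
    ← zpow_natCast (xiq q) b3, ← zpow_add₀ hx, ← mul_assoc, ← zpow_add₀ hw]
  congr 1
  · congr 1; ring

noncomputable def cAux (q : ℕ) {n : ℕ} [NeZero q] (x y z : Fin n → ZMod q) (i : Fin n) : ℤ :=
  ((x i).val : ℤ) - ((y i).val : ℤ) + ((z i).val : ℤ)

/-- sum over u of the product collapses -/
lemma usum (q n : ℕ) [NeZero q] (x y z : Fin n → ZMod q) :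
    ∑ u : Fin n → ZMod q, ∏ i, (xiq q ^ cAux q x y z i) ^ (u i).val
      = if y = x + z then ((q : ℂ)) ^ n else 0 := by
  rw [← Fintype.piFinset_univ,
    Finset.sum_prod_piFinset (univ : Finset (ZMod q))
      (fun i v => (xiq q ^ cAux q x y z i) ^ (v : ZMod q).val)]
  have hcast : ∀ i, ((cAux q x y z i : ℤ) : ZMod q) = x i - y i + z i := by
    intro i
    simp [cAux, ZMod.natCast_val, ZMod.cast_id]
  by_cases h : y = x + z
  · subst h
    have hdvd : ∀ i, (q : ℤ) ∣ cAux q x (x + z) z i := by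
      intro i
      rw [← ZMod.intCast_zmod_eq_zero_iff_dvd]
      rw [hcast i]
      simp [Pi.add_apply]
    simp only [orth]
    rw [Finset.prod_congr rfl (fun i _ => if_pos (hdvd i)), Finset.prod_const]
    simp
  · obtain ⟨i, hi⟩ : ∃ i, y i ≠ x i + z i := by
      by_contra hc
      push_neg at hc
      exact h (funext hc)
    have hnd : ¬ (q : ℤ) ∣ cAux q x y z i := by
      rw [← ZMod.intCast_zmod_eq_zero_iff_dvd, hcast i]
      intro hc
      apply hi
      have h2 : x i - y i + z i = 0 := hc
      have h3 : y i = x i + z i := by linear_combination -h2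
      exact h3
    rw [if_neg h]
    simp only [orth]
    exact Finset.prod_eq_zero (Finset.mem_univ i) (if_neg hnd)

lemma qcard (q n : ℕ) [NeZero q] (x z : Fin n → ZMod q) :
    (∑ i, ((x i).val : ℤ)) + (∑ i, ((z i).val : ℤ)) - (∑ i, (((x + z) i).val : ℤ))
      = (q : ℤ) * ((Finset.univ.filter (fun i => q ≤ (x i).val + (z i).val)).card : ℤ) := by
  have hper : ∀ i : Fin n, ((x i).val : ℤ) + ((z i).val : ℤ) - (((x + z) i).val : ℤ)
      = if q ≤ (x i).val + (z i).val then (q : ℤ) else 0 := by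
    intro i
    have hx := ZMod.val_lt (x i)
    have hz := ZMod.val_lt (z i)
    have hadd : ((x + z) i).val = ((x i).val + (z i).val) % q := by
      rw [Pi.add_apply, ZMod.val_add]
    by_cases hge : q ≤ (x i).val + (z i).val
    · have : ((x + z) i).val = (x i).val + (z i).val - q := by
        rw [hadd, Nat.mod_eq_sub_mod hge, Nat.mod_eq_of_lt (by omega)]
      rw [this, if_pos hge]
      push_cast [Nat.cast_sub hge]
      omega
    · have : ((x + z) i).val = (x i).val + (z i).val := by
        rw [hadd, Nat.mod_eq_of_lt (by omega)]
      rw [this, if_neg hge]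
      push_cast
      ring
  rw [← Finset.sum_add_distrib, ← Finset.sum_sub_distrib,
    Finset.sum_congr rfl (fun i _ => hper i), Finset.sum_ite, Finset.sum_const,
    Finset.sum_const_zero, add_zero, nsmul_eq_mul, mul_comm]

lemma valsub_mod (q : ℕ) [NeZero q] (a b : ZMod (2 * q)) :
    (((a - b).val : ℤ)) % ((2 * q : ℕ) : ℤ)
      = ((a.val : ℤ) - (b.val : ℤ)) % ((2 * q : ℕ) : ℤ) := by
  have h2q : NeZero (2 * q) := ⟨by have := NeZero.ne q; omega⟩
  have h1 : ((a - b) + b).val = ((a - b).val + b.val) % (2 * q) := ZMod.val_add _ _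
  rw [sub_add_cancel] at h1
  have h2 : a.val ≡ (a - b).val + b.val [MOD 2 * q] := by
    rw [Nat.ModEq, h1, Nat.mod_mod_of_dvd _ dvd_rfl]
  have h3 : (a.val : ℤ) ≡ ((a - b).val : ℤ) + (b.val : ℤ) [ZMOD ((2 * q : ℕ) : ℤ)] := by
    have := Int.natCast_modEq_iff.mpr h2
    push_cast at this ⊢
    exact_mod_cast this
  have h4 := (h3.sub_right (b.val : ℤ)).symm
  simpa [Int.ModEq] using h4

lemma finalpt (q n : ℕ) [NeZero q] (f : (Fin n → ZMod q) → ZMod (2 * q))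
    (x z : Fin n → ZMod q) :
    omg q ^ (f x - f (x + z)).val *
      (-1 : ℂ) ^ (Finset.univ.filter (fun i => q ≤ (x i).val + (z i).val)).card
    = omg q ^ (∑ i, (z i).val) *
      omg q ^ (((f x).val : ℤ) - ((f (x + z)).val : ℤ)
        + ((∑ i, (x i).val : ℕ) : ℤ) - ((∑ i, ((x + z) i).val : ℕ) : ℤ)) := by
  have hw := omg_ne_zero q
  rw [← omg_pow_q q, ← pow_mul, ← pow_add,
    ← zpow_natCast (omg q) ((f x - f (x + z)).val + q * _),
    ← zpow_natCast (omg q) (∑ i, (z i).val), ← zpow_add₀ hw]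
  apply zpow_congr_mod hw (omg_pow_2q q)
  have hB := qcard q n x z
  have hA := valsub_mod q (f x) (f (x + z))
  set m : ℤ := ((2 * q : ℕ) : ℤ)
  set k : ℤ := ((Finset.univ.filter (fun i => q ≤ (x i).val + (z i).val)).card : ℤ)
  have hexp : ((∑ i, (z i).val : ℕ) : ℤ) + (((f x).val : ℤ) - ((f (x + z)).val : ℤ)
        + ((∑ i, (x i).val : ℕ) : ℤ) - ((∑ i, ((x + z) i).val : ℕ) : ℤ))
      = (((f x).val : ℤ) - ((f (x + z)).val : ℤ)) + (q : ℤ) * k := by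
    push_cast
    linarith [hB]
  rw [hexp]
  push_cast
  exact Int.ModEq.add_right _ hA

/-- The `2q`-nega-autocorrelation satisfies
`C_f(z) = ω^{Σ_i ẑ_i} Σ_u |N_f(u)|² ξ^{⟨û,ẑ⟩}` for all `z ∈ ℤ_q^n`. -/
theorem negaAC_eq_sum (q n : ℕ) [NeZero q] (hq : 2 ≤ q) (hn : 1 ≤ n)
    (f : (Fin n → ZMod q) → ZMod (2 * q)) (z : Fin n → ZMod q) :
    negaCC q n f f z
      = omg q ^ (∑ i, (z i).val) *
          ∑ u : Fin n → ZMod q,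
            (‖NHT q n f u‖ ^ 2 : ℝ) * xiq q ^ (∑ i, (u i).val * (z i).val) := by
  have hw := omg_ne_zero q
  have hx := xiq_ne_zero q
  have hqC : (q : ℂ) ≠ 0 := Nat.cast_ne_zero.mpr (NeZero.ne q)
  have hqn : ((q : ℂ) ^ n) ≠ 0 := pow_ne_zero _ hqC
  have hsqrt : ((Real.sqrt ((q : ℝ) ^ n) : ℂ))⁻¹ * ((Real.sqrt ((q : ℝ) ^ n) : ℂ))⁻¹
      = ((q : ℂ) ^ n)⁻¹ := by
    rw [← mul_inv, ← Complex.ofReal_mul, Real.mul_self_sqrt (by positivity)]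
    push_cast
    ring
  have step1 : ∀ u : Fin n → ZMod q,
      ((‖NHT q n f u‖ ^ 2 : ℝ) : ℂ) * xiq q ^ (∑ i, (u i).val * (z i).val)
      = ((q : ℂ) ^ n)⁻¹ * ∑ x : Fin n → ZMod q, ∑ y : Fin n → ZMod q,
          omg q ^ (((f x).val : ℤ) - ((f y).val : ℤ)
              + ((∑ i, (x i).val : ℕ) : ℤ) - ((∑ i, (y i).val : ℕ) : ℤ)) *
            ∏ i, (xiq q ^ cAux q x y z i) ^ (u i).val := by
    intro u
    have habs : ((‖NHT q n f u‖ ^ 2 : ℝ) : ℂ)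
        = NHT q n f u * (starRingEnd ℂ) (NHT q n f u) := by
      rw [Complex.mul_conj]; norm_cast; exact Complex.sq_norm _
    rw [habs]
    rw [NHT, map_mul, map_inv₀, Complex.conj_ofReal, map_sum]
    simp only [map_mul, map_pow, conj_omg, conj_xiq]
    rw [mul_mul_mul_comm, hsqrt, mul_assoc, Finset.sum_mul_sum, Finset.sum_mul]
    congr 1
    refine Finset.sum_congr rfl fun x _ => ?_
    rw [Finset.sum_mul]
    refine Finset.sum_congr rfl fun y _ => ?_
    rw [combine q]
    congr 1
    have hexp : ((∑ i, (x i).val * (u i).val : ℕ) : ℤ)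
          - ((∑ i, (y i).val * (u i).val : ℕ) : ℤ)
          + ((∑ i, (u i).val * (z i).val : ℕ) : ℤ)
        = ∑ i, cAux q x y z i * ((u i).val : ℤ) := by
      push_cast
      rw [← Finset.sum_sub_distrib, ← Finset.sum_add_distrib]
      refine Finset.sum_congr rfl fun i _ => ?_
      simp only [cAux]
      push_cast
      ring
    rw [hexp, zpow_sum₀ hx]
    exact Finset.prod_congr rfl fun i _ => by rw [zpow_mul, zpow_natCast]
  -- rewrite RHS using step1
  conv_rhs => rw [Finset.sum_congr rfl fun u _ => step1 u]
  rw [← Finset.mul_sum]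
  -- swap sums: u outside to inside
  rw [show (∑ u : Fin n → ZMod q, ∑ x : Fin n → ZMod q, ∑ y : Fin n → ZMod q,
        omg q ^ (((f x).val : ℤ) - ((f y).val : ℤ)
            + ((∑ i, (x i).val : ℕ) : ℤ) - ((∑ i, (y i).val : ℕ) : ℤ)) *
          ∏ i, (xiq q ^ cAux q x y z i) ^ (u i).val)
      = ∑ x : Fin n → ZMod q, ∑ y : Fin n → ZMod q, ∑ u : Fin n → ZMod q,
        omg q ^ (((f x).val : ℤ) - ((f y).val : ℤ)
            + ((∑ i, (x i).val : ℕ) : ℤ) - ((∑ i, (y i).val : ℕ) : ℤ)) *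
          ∏ i, (xiq q ^ cAux q x y z i) ^ (u i).val from by
    rw [Finset.sum_comm]
    exact Finset.sum_congr rfl fun x _ => Finset.sum_comm]
  -- collapse the u-sum and y-sum
  have hxcollapse : ∀ x : Fin n → ZMod q,
      (∑ y : Fin n → ZMod q, ∑ u : Fin n → ZMod q,
        omg q ^ (((f x).val : ℤ) - ((f y).val : ℤ)
            + ((∑ i, (x i).val : ℕ) : ℤ) - ((∑ i, (y i).val : ℕ) : ℤ)) *
          ∏ i, (xiq q ^ cAux q x y z i) ^ (u i).val)
      = omg q ^ (((f x).val : ℤ) - ((f (x + z)).val : ℤ)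
            + ((∑ i, (x i).val : ℕ) : ℤ) - ((∑ i, ((x + z) i).val : ℕ) : ℤ)) * (q : ℂ) ^ n := by
    intro x
    have : ∀ y : Fin n → ZMod q,
        (∑ u : Fin n → ZMod q,
          omg q ^ (((f x).val : ℤ) - ((f y).val : ℤ)
              + ((∑ i, (x i).val : ℕ) : ℤ) - ((∑ i, (y i).val : ℕ) : ℤ)) *
            ∏ i, (xiq q ^ cAux q x y z i) ^ (u i).val)
        = omg q ^ (((f x).val : ℤ) - ((f y).val : ℤ)
              + ((∑ i, (x i).val : ℕ) : ℤ) - ((∑ i, (y i).val : ℕ) : ℤ)) *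
            (if y = x + z then ((q : ℂ)) ^ n else 0) := by
      intro y
      rw [← Finset.mul_sum, usum]
    rw [Finset.sum_congr rfl fun y _ => this y]
    simp only [mul_ite, mul_zero]
    rw [Finset.sum_ite_eq' Finset.univ (x + z)]
    simp
  rw [Finset.sum_congr rfl fun x _ => hxcollapse x]
  -- clean up the (q^n)⁻¹ factor
  rw [negaCC]
  rw [Finset.sum_congr rfl fun x (_ : x ∈ Finset.univ) => finalpt q n f x z]
  rw [← Finset.mul_sum]
  congr 1
  rw [Finset.mul_sum]
  apply Finset.sum_congr rfl
  intro x _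
  rw [mul_comm (((q : ℂ) ^ n)⁻¹), mul_assoc, mul_inv_cancel₀ hqn, mul_one]
end

section
/- Let q ≥ 2 be any integer. Then the function f : ℤ_q² → ℤ_{2q} defined by f(x_1, x_2) = 2x̂_1x̂_2 + x̂_1 (the integer value reduced modulo 2q) is 2q-negabent. -/
open Finset

lemma xiq_prim (q : ℕ) [NeZero q] : IsPrimitiveRoot (xiq q) q :=
  Complex.isPrimitiveRoot_exp q (NeZero.ne q)

lemma omg_prim (q : ℕ) [NeZero q] : IsPrimitiveRoot (omg q) (2 * q) := by
  have h := Complex.isPrimitiveRoot_exp (2 * q) (by simp [NeZero.ne q])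
  have hq : (q : ℂ) ≠ 0 := Nat.cast_ne_zero.mpr (NeZero.ne q)
  convert h using 2
  unfold omg; congr 1; push_cast; field_simp

lemma xiq_eq (q : ℕ) [NeZero q] : xiq q = omg q ^ 2 := by
  unfold xiq omg; rw [← Complex.exp_nat_mul]; congr 1; push_cast; ring

lemma omg_pow_val (q : ℕ) [NeZero q] (n : ℕ) :
    omg q ^ ((n : ZMod (2 * q)).val) = omg q ^ n := by
  have h2q : omg q ^ (2 * q) = 1 := (omg_prim q).pow_eq_one
  conv_rhs => rw [pow_eq_pow_mod n h2q]
  rw [ZMod.val_natCast]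

lemma zmod_sum_val {q : ℕ} [NeZero q] (g : ℕ → ℂ) :
    ∑ a : ZMod q, g a.val = ∑ i ∈ Finset.range q, g i := by
  obtain ⟨n, rfl⟩ := Nat.exists_eq_succ_of_ne_zero (NeZero.ne q)
  rw [← Fin.sum_univ_eq_sum_range]; rfl

lemma negabent_sum_step1 (q : ℕ) [NeZero q] (u : Fin 2 → ZMod q) :
    (∑ x : Fin 2 → ZMod q,
      omg q ^ (((2 * (x 0).val * (x 1).val + (x 0).val : ℕ) : ZMod (2*q))).val
        * xiq q ^ (∑ i, (x i).val * (u i).val) * omg q ^ (∑ i, (x i).val))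
    = ∑ b : ZMod q,
        (∑ a : ZMod q, (xiq q ^ (b.val + (u 0).val + 1)) ^ a.val)
          * (xiq q ^ (b.val * (u 1).val) * omg q ^ b.val) := by
  rw [← Equiv.sum_comp (piFinTwoEquiv fun _ => ZMod q).symm]
  rw [Fintype.sum_prod_type]
  rw [Finset.sum_comm]
  refine Finset.sum_congr rfl fun b _ => ?_
  rw [Finset.sum_mul]
  refine Finset.sum_congr rfl fun a _ => ?_
  simp only [piFinTwoEquiv_symm_apply, Matrix.cons_val_zero, Matrix.cons_val_one,
    Matrix.head_cons, Fin.sum_univ_two]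
  rw [omg_pow_val, xiq_eq]
  simp only [← pow_mul, ← pow_add]
  congr 1
  simp only [show (1:Fin 2) = Fin.succ 0 from rfl, Fin.cons_succ, Fin.cons_zero]
  ring

lemma negabent_sum_step2 (q : ℕ) [NeZero q] (u : Fin 2 → ZMod q) :
    (∑ b : ZMod q,
        (∑ a : ZMod q, (xiq q ^ (b.val + (u 0).val + 1)) ^ a.val)
          * (xiq q ^ (b.val * (u 1).val) * omg q ^ b.val))
    = (q : ℂ) * (xiq q ^ (((-(u 0) - 1 : ZMod q)).val * (u 1).val)
        * omg q ^ ((-(u 0) - 1 : ZMod q)).val) := by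
  have hprim := xiq_prim q
  have hxq : xiq q ^ q = 1 := hprim.pow_eq_one
  have hcrit : ∀ b : ZMod q, (xiq q ^ (b.val + (u 0).val + 1) = 1) ↔ b = -(u 0) - 1 := by
    intro b
    rw [hprim.pow_eq_one_iff_dvd, ← ZMod.natCast_eq_zero_iff]
    push_cast [ZMod.natCast_val, ZMod.cast_id]
    constructor <;> intro h <;> linear_combination h
  rw [Finset.sum_eq_single (-(u 0) - 1 : ZMod q)]
  · rw [(hcrit _).mpr rfl]
    simp [Finset.card_univ]
  · intro b _ hb
    have hz1 : xiq q ^ (b.val + (u 0).val + 1) ≠ 1 := fun h => hb ((hcrit b).mp h)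
    have h0 : ∑ a : ZMod q, (xiq q ^ (b.val + (u 0).val + 1)) ^ a.val = 0 := by
      rw [zmod_sum_val (fun i => (xiq q ^ (b.val + (u 0).val + 1)) ^ i), geom_sum_eq hz1,
        ← pow_mul, mul_comm, pow_mul, hxq, one_pow, sub_self, zero_div]
    rw [h0, zero_mul]
  · simp

/-- For any `q ≥ 2`, the function `f(x₁,x₂) = 2x̂₁x̂₂ + x̂₁ (mod 2q)`
on `ℤ_q²` is `2q`-negabent. -/
theorem bivariate_negabent (q : ℕ) [NeZero q] (hq : 2 ≤ q) :
    ∀ u : Fin 2 → ZMod q,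
      ‖NHT q 2
        (fun x => ((2 * (x 0).val * (x 1).val + (x 0).val : ℕ) : ZMod (2 * q))) u‖ = 1 := by
  intro u
  have hq0 : (0:ℝ) < (q:ℝ) := by positivity
  have habsx : ‖xiq q‖ = 1 := by
    exact Complex.norm_eq_one_of_pow_eq_one (xiq_prim q).pow_eq_one (NeZero.ne q)
  have habso : ‖omg q‖ = 1 := by
    exact Complex.norm_eq_one_of_pow_eq_one (omg_prim q).pow_eq_one (by simp [NeZero.ne q])
  unfold NHT
  rw [negabent_sum_step1 q u, negabent_sum_step2 q u]
  have hsqrt : Real.sqrt ((q : ℝ) ^ 2) = (q : ℝ) := Real.sqrt_sq hq0.le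
  rw [hsqrt]
  rw [norm_mul, norm_inv, norm_mul, norm_mul, norm_pow, norm_pow, habsx, habso,
    one_pow, one_pow, mul_one, mul_one]
  rw [Complex.norm_real, Complex.norm_natCast, Real.norm_of_nonneg hq0.le]
  exact inv_mul_cancel₀ hq0.ne'
end
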